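/- arXiv:1406.7453 — 2 statements merged into one kernel-verified Lean document; each statement's English description precedes it below -/
import Mathlib

section
/- For every positive integer k, the simple graph H = \overline{K}_{k+1} ∨ K_{2k-1} (the join of an independent set of k+1 vertices with a complete graph on 2k-1 vertices) has 3k vertices and minimum degree δ(H) = 2k−1, but H does not contain k pairwise vertex-disjoint cycles. -/
open SimpleGraph

/-- `k` pairwise vertex-disjoint cycles in a simple graph (each cycle has ≥ 3 vertices). -/
def HasDisjCycles {V : Type*} (G : SimpleGraph V) (k : ℕ) : Prop :=
  ∃ (f : Fin k → V) (c : ∀ i, G.Walk (f i) (f i)),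
    (∀ i, (c i).IsCycle) ∧
    ∀ i j, i ≠ j → ∀ x, x ∈ (c i).support → x ∉ (c j).support

/-- The join `G ∨ H` of two simple graphs on disjoint vertex sets. -/
def graphJoin {α β : Type*} (G : SimpleGraph α) (H : SimpleGraph β) : SimpleGraph (α ⊕ β) where
  Adj x y :=
    match x, y with
    | Sum.inl a, Sum.inl b => G.Adj a b
    | Sum.inr a, Sum.inr b => H.Adj a b
    | _, _ => True
  symm := by
    constructor
    rintro (a|a) (b|b) h
    · exact G.adj_symm h
    · trivial
    · trivial
    · exact H.adj_symm h
  loopless := by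
    constructor
    rintro (a|a) h
    · exact G.irrefl h
    · exact H.irrefl h

/-- The disjoint union `G ∪ H` of two simple graphs on disjoint vertex sets. -/
def graphSum {α β : Type*} (G : SimpleGraph α) (H : SimpleGraph β) : SimpleGraph (α ⊕ β) where
  Adj x y :=
    match x, y with
    | Sum.inl a, Sum.inl b => G.Adj a b
    | Sum.inr a, Sum.inr b => H.Adj a b
    | _, _ => False
  symm := by
    constructor
    rintro (a|a) (b|b) h
    · exact G.adj_symm h
    · exact h.elim
    · exact h.elim
    · exact H.adj_symm h
  loopless := by
    constructor
    rintro (a|a) h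
    · exact G.irrefl h
    · exact H.irrefl h

/-- The graph `Y_{h,t} = K̄_h ∨ (K_t ∪ K_t)`. -/
def Ygraph (h t : ℕ) : SimpleGraph (Fin h ⊕ (Fin t ⊕ Fin t)) :=
  graphJoin (⊥ : SimpleGraph (Fin h)) (graphSum (⊤ : SimpleGraph (Fin t)) (⊤ : SimpleGraph (Fin t)))

/-- The wheel `K_1 ∨ C_t`. -/
def wheelGraph (t : ℕ) : SimpleGraph (Fin 1 ⊕ Fin t) :=
  graphJoin (⊤ : SimpleGraph (Fin 1)) (SimpleGraph.cycleGraph t)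

/-- A graph is a wheel if it is isomorphic to `K_1 ∨ C_t` for some `t ≥ 3`. -/
def IsWheel {V : Type*} (G : SimpleGraph V) : Prop :=
  ∃ t, 3 ≤ t ∧ Nonempty (G ≃g wheelGraph t)

/-- The independence number of a graph. -/
noncomputable def indepNum {V : Type*} [Fintype V] (G : SimpleGraph V) : ℕ :=
  sSup {m | ∃ S : Set V, S.Pairwise (fun u v => ¬ G.Adj u v) ∧ S.ncard = m}

/-- The maximum size of a matching in a graph. -/
noncomputable def matchNum {V : Type*} [Fintype V] (F : SimpleGraph V) : ℕ :=
  sSup {m | ∃ M : Set (Sym2 V), M ⊆ F.edgeSet ∧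
    (M.Pairwise fun e f => ∀ v, v ∈ e → v ∉ f) ∧ M.ncard = m}

/-- `k` pairwise vertex-disjoint cycles in a multigraph given by underlying simple graph `G`,
loop set `L` and strong-edge set `D`: a cycle is a loop vertex, a strong edge, or a
cycle of `G` on at least 3 vertices. -/
def MultiHasDisjCycles {V : Type*} (G : SimpleGraph V) (L : Set V) (D : Set (Sym2 V))
    (k : ℕ) : Prop :=
  ∃ C : Fin k → Set V,
    (∀ i j, i ≠ j → Disjoint (C i) (C j)) ∧
    ∀ i,
      (∃ v ∈ L, C i = {v}) ∨
      (∃ e ∈ D, C i = {v | v ∈ e}) ∨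
      (∃ (v : V) (w : G.Walk v v), w.IsCycle ∧ C i = {x | x ∈ w.support})

/-- `k` pairwise vertex-disjoint cycles in a loopless multigraph given by underlying simple
graph `G` and strong-edge set `D`: a cycle is a strong edge or a cycle of `G`. -/
def MGHasDisjCycles {V : Type*} (G : SimpleGraph V) (D : Set (Sym2 V)) (k : ℕ) : Prop :=
  ∃ C : Fin k → Set V,
    (∀ i j, i ≠ j → Disjoint (C i) (C j)) ∧
    ∀ i,
      (∃ e ∈ D, C i = {v | v ∈ e}) ∨
      (∃ (v : V) (w : G.Walk v v), w.IsCycle ∧ C i = {x | x ∈ w.support})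

/-- The simple graph formed by the strong edges `D` avoiding the loop vertices `L`. -/
def strongGraphOff {V : Type*} (D : Set (Sym2 V)) (L : Set V) : SimpleGraph V where
  Adj u v := u ≠ v ∧ s(u, v) ∈ D ∧ u ∉ L ∧ v ∉ L
  symm := by
    constructor
    rintro u v ⟨h1, h2, h3, h4⟩
    exact ⟨h1.symm, by rwa [Sym2.eq_swap], h4, h3⟩
  loopless := by constructor; rintro u ⟨h, -⟩; exact h rfl

/-- `H` restricted to `A` has a perfect matching: a set of edges of `H` inside `A`
covering every vertex of `A` exactly once. -/
def HasPerfectMatchingOn {V : Type*} (H : SimpleGraph V) (A : Set V) : Prop :=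
  ∃ M : Set (Sym2 V), M ⊆ H.edgeSet ∧ (∀ e ∈ M, ∀ v, v ∈ e → v ∈ A) ∧
    ∀ v ∈ A, ∃! e, e ∈ M ∧ v ∈ e

/-- `G` is `k`-connected. -/
def IsKConnected {V : Type*} [Fintype V] (G : SimpleGraph V) (k : ℕ) : Prop :=
  k < Fintype.card V ∧ ∀ S : Set V, S.ncard < k → (G.induce Sᶜ).Connected


lemma exists_two_inr {α β : Type*} {G : SimpleGraph (α ⊕ β)}
    (hG : ∀ a b, ¬ G.Adj (Sum.inl a) (Sum.inl b)) {v : α ⊕ β}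
    (w : G.Walk v v) (hw : w.IsCycle) :
    ∃ b₁ b₂ : β, b₁ ≠ b₂ ∧ Sum.inr b₁ ∈ w.support ∧ Sum.inr b₂ ∈ w.support := by
  have hlen : 3 ≤ w.length := hw.three_le_length
  have hchain : List.IsChain G.Adj w.support := w.isChain_adj_support
  have hnodup : w.support.tail.Nodup := hw.support_nodup
  have hlsup : w.support.length = w.length + 1 := w.length_support
  have hlast? : w.support.getLast? = some v := by
    rw [List.getLast?_eq_getLast (by simp), w.getLast_support]
  obtain ⟨a, b, c, d, t, hs⟩ : ∃ a b c d t, w.support = a :: b :: c :: d :: t := by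
    rcases hsup : w.support with _|⟨a,_|⟨b,_|⟨c,_|⟨d,t⟩⟩⟩⟩
    · rw [hsup] at hlsup; simp only [List.length_cons, List.length_nil] at hlsup; omega
    · rw [hsup] at hlsup; simp only [List.length_cons, List.length_nil] at hlsup; omega
    · rw [hsup] at hlsup; simp only [List.length_cons, List.length_nil] at hlsup; omega
    · rw [hsup] at hlsup; simp only [List.length_cons, List.length_nil] at hlsup; omega
    · exact ⟨_, _, _, _, _, rfl⟩
  have hhead : a = v := by
    have h2 := w.support_eq_cons
    rw [hs] at h2
    exact (List.cons.injEq _ _ _ _ ▸ h2).1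
  have hmem : v ∈ d :: t := by
    rw [hs, List.getLast?_cons_cons, List.getLast?_cons_cons, List.getLast?_cons_cons]
      at hlast?
    exact List.mem_of_mem_getLast? (Option.mem_def.mpr hlast?)
  rw [hs] at hchain hnodup
  simp only [List.isChain_cons_cons] at hchain
  obtain ⟨hab, hbc, hcd, -⟩ := hchain
  simp only [List.tail_cons, List.nodup_cons, List.mem_cons] at hnodup
  have key : ∀ x y : α ⊕ β, G.Adj x y → (∃ b', x = Sum.inr b') ∨ (∃ b', y = Sum.inr b') := by
    rintro (x|x) (y|y) h
    · exact absurd h (hG x y)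
    · exact Or.inr ⟨y, rfl⟩
    · exact Or.inl ⟨x, rfl⟩
    · exact Or.inl ⟨x, rfl⟩
  have hmemsup : ∀ x, x = a ∨ x = b ∨ x = c ∨ x = d ∨ x ∈ t → x ∈ w.support := by
    intro x hx; rw [hs]; simpa using hx
  rcases hc : c with c' | c'
  · -- c is inl : then b and d are inr
    subst hc
    obtain ⟨b', hb⟩ : ∃ b', b = Sum.inr b' := by
      rcases key b _ hbc with h | ⟨y, hy⟩
      · exact h
      · simp at hy
    obtain ⟨d', hd⟩ : ∃ d', d = Sum.inr d' := by
      rcases key _ d hcd with ⟨y, hy⟩ | h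
      · simp at hy
      · exact h
    refine ⟨b', d', ?_, hmemsup _ (Or.inr (Or.inl hb.symm)),
        hmemsup _ (Or.inr (Or.inr (Or.inr (Or.inl hd.symm))))⟩
    rintro rfl
    exact hnodup.1 (Or.inr (Or.inl (hb.trans hd.symm)))
  · -- c = inr c'
    rcases key a b hab with ⟨a', ha⟩ | ⟨b', hb⟩
    · have hac : a ≠ c := by
        intro h
        have h2 : c ∈ d :: t := by rw [← h, hhead]; exact hmem
        rw [List.mem_cons] at h2
        exact hnodup.2.1 h2
      refine ⟨a', c', ?_, hmemsup _ (Or.inl ha.symm),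
        hmemsup _ (Or.inr (Or.inr (Or.inl hc.symm)))⟩
      rintro rfl
      exact hac (ha.trans hc.symm)
    · refine ⟨b', c', ?_, hmemsup _ (Or.inr (Or.inl hb.symm)),
        hmemsup _ (Or.inr (Or.inr (Or.inl hc.symm)))⟩
      rintro rfl
      exact hnodup.1 (Or.inl (hb.trans hc.symm))

/-- The graph `H = K̄_{k+1} ∨ K_{2k-1}` has `3k` vertices and minimum degree `2k - 1`,
but has no `k` disjoint cycles. -/
theorem extremal_example (k : ℕ) (hk : 0 < k) :
    let H : SimpleGraph (Fin (k + 1) ⊕ Fin (2 * k - 1)) :=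
      graphJoin (⊥ : SimpleGraph (Fin (k + 1))) (⊤ : SimpleGraph (Fin (2 * k - 1)))
    Fintype.card (Fin (k + 1) ⊕ Fin (2 * k - 1)) = 3 * k ∧
      (∀ v, 2 * k - 1 ≤ (H.neighborSet v).ncard) ∧
      (∃ v, (H.neighborSet v).ncard = 2 * k - 1) ∧
      ¬ HasDisjCycles H k := by
  intro H
  have hG : ∀ (a b : Fin (k+1)), ¬ H.Adj (Sum.inl a) (Sum.inl b) := by
    intro a b h
    exact h
  have hnl : ∀ a : Fin (k+1), H.neighborSet (Sum.inl a) = Set.range Sum.inr := by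
    intro a
    ext x
    cases x with
    | inl b => simp only [mem_neighborSet]; constructor
               · intro h; exact absurd h (hG a b)
               · rintro ⟨y, hy⟩; simp at hy
    | inr b => simp only [mem_neighborSet]
               exact ⟨fun _ => ⟨b, rfl⟩, fun _ => trivial⟩
  have hcardr : (Set.range (Sum.inr : Fin (2*k-1) → Fin (k+1) ⊕ Fin (2*k-1))).ncard
      = 2 * k - 1 := by
    rw [← Nat.card_coe_set_eq, Nat.card_range_of_injective Sum.inr_injective,
      Nat.card_eq_fintype_card, Fintype.card_fin]
  refine ⟨?_, ?_, ?_, ?_⟩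
  · simp only [Fintype.card_sum, Fintype.card_fin]; omega
  · rintro (a | a)
    · rw [hnl a, hcardr]
    · -- neighborSet (inr a) = {inr a}ᶜ
      have h : H.neighborSet (Sum.inr a) = {Sum.inr a}ᶜ := by
        ext x
        cases x with
        | inl b => simp only [mem_neighborSet, Set.mem_compl_iff, Set.mem_singleton_iff]
                   exact ⟨fun _ => by simp, fun _ => trivial⟩
        | inr b => simp only [mem_neighborSet, Set.mem_compl_iff, Set.mem_singleton_iff]
                   constructor
                   · intro hadj h2
                     exact (top_adj _ _).mp hadj (by simpa using h2.symm)
                   · intro h2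
                     exact (top_adj a b).mpr (fun hh => h2 (by rw [hh]))
      rw [h]
      have := Set.ncard_add_ncard_compl ({Sum.inr a} : Set (Fin (k+1) ⊕ Fin (2*k-1)))
      rw [Set.ncard_singleton, Nat.card_eq_fintype_card, Fintype.card_sum,
        Fintype.card_fin, Fintype.card_fin] at this
      omega
  · exact ⟨Sum.inl ⟨0, by omega⟩, by rw [hnl, hcardr]⟩
  · rintro ⟨f, c, hcyc, hdisj⟩
    choose b₁ b₂ hne h1 h2 using fun i => exists_two_inr hG (c i) (hcyc i)
    have hF : Function.Injective
        (fun p : Fin k × Bool => if p.2 then b₁ p.1 else b₂ p.1) := by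
      rintro ⟨i, s⟩ ⟨j, t⟩ h
      simp only at h
      have hmem : ∀ (i : Fin k) (s : Bool),
          Sum.inr (if s then b₁ i else b₂ i) ∈ (c i).support := by
        intro i s; cases s
        · exact h2 i
        · exact h1 i
      by_cases hij : i = j
      · subst hij
        cases s <;> cases t
        · rfl
        · simp only [if_true, if_false] at h
          exact (hne i h.symm).elim
        · simp only [if_true, if_false] at h
          exact (hne i h).elim
        · rfl
      · exact absurd (h ▸ hmem i s) (hdisj j i (fun hh => hij hh.symm) _ (hmem j t))
    have := Fintype.card_le_of_injective _ hF
    rw [Fintype.card_prod, Fintype.card_fin, Fintype.card_bool, Fintype.card_fin] at this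
    omega
end

section
/- Let k ≥ 2 and let a loopless multigraph be given by a pair (G, F), where G is a finite simple graph on n vertices and F ⊆ E(G) is the set of strong edges. Assume every vertex has at least 2k−1 neighbors in G and that G is extremal, i.e., α(G) = n − 2k + 1. If the multigraph contains k disjoint cycles, then: (1) every big set of G is incident to at least one strong edge; and (2) for any two distinct big sets I and J, it is not the case that all strong edges intersecting I ∪ J have a common endpoint outside I ∪ J. -/
open SimpleGraph

section Aux

variable {V : Type*} {G : SimpleGraph V}

private lemma walk_support_getElem {u v : V} (p : G.Walk u v) :
    ∀ (n : ℕ) (h : n < p.support.length), p.support[n] = p.getVert n := by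
  induction p with
  | nil =>
    intro n h
    simp only [SimpleGraph.Walk.support_nil, List.length_singleton] at h
    interval_cases n
    simp [SimpleGraph.Walk.getVert]
  | cons ha q ih =>
    intro n h
    cases n with
    | zero => simp
    | succ m =>
      simp only [SimpleGraph.Walk.support_cons, List.length_cons,
        SimpleGraph.Walk.length_support] at h ⊢
      rw [List.getElem_cons_succ, ih m (by simp [SimpleGraph.Walk.length_support]; omega),
        SimpleGraph.Walk.getVert_cons_succ]

private lemma cycle_getVert_inj {v : V} {p : G.Walk v v} (hp : p.IsCycle)
    {i j : ℕ} (hi1 : 1 ≤ i) (hi2 : i ≤ p.length) (hj1 : 1 ≤ j) (hj2 : j ≤ p.length)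
    (hne : i ≠ j) : p.getVert i ≠ p.getVert j := by
  intro heq
  have hlen := p.length_support
  have hi : i < p.support.length := by omega
  have hj : j < p.support.length := by omega
  rw [← walk_support_getElem p i hi, ← walk_support_getElem p j hj] at heq
  have htl : p.support.tail.length = p.length := by
    simp [List.length_tail, hlen]
  have hi' : i - 1 < p.support.tail.length := by omega
  have hj' : j - 1 < p.support.tail.length := by omega
  have e1 : p.support.tail[i-1] = p.support[i] := by
    rw [List.getElem_tail]; congr 1; omega
  have e2 : p.support.tail[j-1] = p.support[j] := by
    rw [List.getElem_tail]; congr 1; omega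
  rw [← e1, ← e2] at heq
  have := (hp.support_nodup.getElem_inj_iff (hi := hi') (hj := hj')).mp heq
  omega

private lemma cycle_two_outside {I : Set V}
    (hI : I.Pairwise (fun u v => ¬ G.Adj u v)) {v : V} {p : G.Walk v v} (hp : p.IsCycle) :
    ∃ a b, a ∈ p.support ∧ b ∈ p.support ∧ a ≠ b ∧ a ∉ I ∧ b ∉ I := by
  by_contra hcon
  push_neg at hcon
  have hl3 := hp.three_le_length
  -- pick, for each edge of the cycle, an endpoint outside I
  have pick : ∀ i, i < p.length → ∃ x, (x = p.getVert i ∨ x = p.getVert (i+1)) ∧ x ∉ I := by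
    intro i hi
    by_cases h1 : p.getVert i ∈ I
    · by_cases h2 : p.getVert (i+1) ∈ I
      · have hadj := p.adj_getVert_succ hi
        exact absurd hadj (hI h1 h2 (G.ne_of_adj hadj))
      · exact ⟨_, Or.inr rfl, h2⟩
    · exact ⟨_, Or.inl rfl, h1⟩
  have hmem : ∀ (x : V) (i : ℕ), i ≤ p.length → x = p.getVert i → x ∈ p.support := by
    intro x i hi hx
    exact SimpleGraph.Walk.mem_support_iff_exists_getVert.mpr ⟨i, hx.symm, hi⟩
  obtain ⟨o0, ho0, ho0I⟩ := pick 0 (by omega)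
  obtain ⟨o1, ho1, ho1I⟩ := pick 1 (by omega)
  obtain ⟨o2, ho2, ho2I⟩ := pick 2 (by omega)
  have hm0 : o0 ∈ p.support := by
    rcases ho0 with h | h
    · exact hmem _ 0 (by omega) h
    · exact hmem _ 1 (by omega) h
  have hm1 : o1 ∈ p.support := by
    rcases ho1 with h | h
    · exact hmem _ 1 (by omega) h
    · exact hmem _ 2 (by omega) h
  have hm2 : o2 ∈ p.support := by
    rcases ho2 with h | h
    · exact hmem _ 2 (by omega) h
    · exact hmem _ 3 (by omega) h
  have heq01 : o0 = o1 := by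
    by_contra hne
    exact ho1I (hcon o0 o1 hm0 hm1 hne ho0I)
  have heq12 : o1 = o2 := by
    by_contra hne
    exact ho2I (hcon o1 o2 hm1 hm2 hne ho1I)
  -- distinctness facts
  have hg0 : p.getVert 0 = p.getVert p.length := by
    rw [p.getVert_zero, p.getVert_length]
  have d01 : p.getVert 0 ≠ p.getVert 1 := by
    rw [hg0]; exact cycle_getVert_inj hp (by omega) (le_refl _) (by omega) (by omega) (by omega)
  have d02 : p.getVert 0 ≠ p.getVert 2 := by
    rw [hg0]; exact cycle_getVert_inj hp (by omega) (le_refl _) (by omega) (by omega) (by omega)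
  have d12 : p.getVert 1 ≠ p.getVert 2 :=
    cycle_getVert_inj hp (by omega) (by omega) (by omega) (by omega) (by omega)
  have d13 : p.getVert 1 ≠ p.getVert 3 :=
    cycle_getVert_inj hp (by omega) (by omega) (by omega) (by omega) (by omega)
  -- o0 = o1 forces o1 = getVert 1
  have ho1g : o1 = p.getVert 1 := by
    rcases ho0 with h0 | h0 <;> rcases ho1 with h1 | h1
    · exact absurd (h0.symm.trans (heq01.trans h1)) d01
    · exact absurd (h0.symm.trans (heq01.trans h1)) d02
    · exact h1
    · exact absurd (h0.symm.trans (heq01.trans h1)) d12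
  rcases ho2 with h2 | h2
  · exact d12 (ho1g.symm.trans (heq12.trans h2))
  · exact d13 (ho1g.symm.trans (heq12.trans h2))

private lemma count_le {k : ℕ} {C : Fin k → Set V} [Fintype V]
    (hdisj : ∀ i j, i ≠ j → Disjoint (C i) (C j)) {I : Set V}
    (h2 : ∀ i, ∃ a b, a ≠ b ∧ a ∈ C i ∧ b ∈ C i ∧ a ∉ I ∧ b ∉ I) :
    2 * k ≤ Iᶜ.ncard := by
  choose a b hab haC hbC haI hbI using h2
  set f : Fin k × Bool → V := fun x => if x.2 then a x.1 else b x.1 with hf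
  have hmemC : ∀ x : Fin k × Bool, f x ∈ C x.1 := by
    rintro ⟨i, (_|_)⟩ <;> simp [hf, haC, hbC]
  have hinj : Function.Injective f := by
    rintro ⟨i, si⟩ ⟨j, sj⟩ hfe
    by_cases hij : i = j
    · subst hij
      cases si <;> cases sj <;> simp_all [hf]
      · exact (hab i hfe.symm).elim
    · exfalso
      have h1 := hmemC (i, si)
      have h2 := hmemC (j, sj)
      rw [hfe] at h1
      exact (Set.disjoint_left.mp (hdisj i j hij) h1) h2
  have hsub : Set.range f ⊆ Iᶜ := by
    rintro _ ⟨⟨i, (_|_)⟩, rfl⟩ <;> simp [hf, haI, hbI]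
  have hcard : (Set.range f).ncard = 2 * k := by
    rw [← Nat.card_coe_set_eq, Nat.card_range_of_injective hinj,
      Nat.card_eq_fintype_card, Fintype.card_prod, Fintype.card_fin, Fintype.card_bool]
    ring
  calc 2 * k = (Set.range f).ncard := hcard.symm
    _ ≤ Iᶜ.ncard := Set.ncard_le_ncard hsub (Set.toFinite _)

end Aux

/-- In an extremal loopless multigraph `(G, F)` with `k` disjoint cycles, every big set
meets a strong edge, and no two distinct big sets have all strong edges meeting their
union share a common endpoint outside the union. -/
theorem extremal_big_sets {V : Type*} [Fintype V] (G : SimpleGraph V) (F : Set (Sym2 V))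
    (hF : F ⊆ G.edgeSet) (k : ℕ) (hk : 2 ≤ k)
    (hdeg : ∀ v : V, 2 * k - 1 ≤ (G.neighborSet v).ncard)
    (hext : _root_.indepNum G = Fintype.card V - 2 * k + 1)
    (h : MGHasDisjCycles G F k) :
    (∀ I : Set V, I.Pairwise (fun u v => ¬ G.Adj u v) →
      I.ncard = Fintype.card V - 2 * k + 1 →
      ∃ e ∈ F, ∃ v ∈ I, v ∈ e) ∧
    (∀ I J : Set V, I.Pairwise (fun u v => ¬ G.Adj u v) →
      I.ncard = Fintype.card V - 2 * k + 1 →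
      J.Pairwise (fun u v => ¬ G.Adj u v) →
      J.ncard = Fintype.card V - 2 * k + 1 →
      I ≠ J →
      ¬ ∃ w, w ∉ I ∪ J ∧ ∀ e ∈ F, (∃ v ∈ I ∪ J, v ∈ e) → w ∈ e) := by
  obtain ⟨C, hCd, hCspec⟩ := h
  have hcompl : ∀ I : Set V, I.ncard = Fintype.card V - 2 * k + 1 → Iᶜ.ncard ≤ 2 * k - 1 := by
    intro I hI
    have h1 := Set.ncard_add_ncard_compl I
    rw [Nat.card_eq_fintype_card] at h1
    omega
  have key : ∀ I : Set V, I.Pairwise (fun u v => ¬ G.Adj u v) →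
      I.ncard = Fintype.card V - 2 * k + 1 →
      ∃ i, ∃ e ∈ F, C i = {v | v ∈ e} ∧ ∃ u ∈ I, u ∈ e := by
    intro I hIind hIcard
    by_contra hcon
    push_neg at hcon
    have h2 : ∀ i, ∃ a b, a ≠ b ∧ a ∈ C i ∧ b ∈ C i ∧ a ∉ I ∧ b ∉ I := by
      intro i
      rcases hCspec i with ⟨e, heF, hCe⟩ | ⟨v, p, hcyc, hCp⟩
      · have hnd : ¬ e.IsDiag := G.not_isDiag_of_mem_edgeSet (hF heF)
        obtain ⟨x, y⟩ := e
        have hxy : x ≠ y := by simpa [Sym2.mk_isDiag_iff] using hnd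
        have hxe : x ∈ s(x, y) := by simp
        have hye : y ∈ s(x, y) := by simp
        refine ⟨x, y, hxy, ?_, ?_, ?_, ?_⟩
        · rw [hCe]; exact hxe
        · rw [hCe]; exact hye
        · exact fun hxI => hcon i _ heF hCe x hxI hxe
        · exact fun hyI => hcon i _ heF hCe y hyI hye
      · obtain ⟨a, b, ha, hb, hne, haI, hbI⟩ := cycle_two_outside hIind hcyc
        refine ⟨a, b, hne, ?_, ?_, haI, hbI⟩
        · rw [hCp]; exact ha
        · rw [hCp]; exact hb
    have hge := count_le hCd h2
    have hle := hcompl I hIcard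
    omega
  constructor
  · intro I hIind hIcard
    obtain ⟨i, e, heF, _, u, huI, hue⟩ := key I hIind hIcard
    exact ⟨e, heF, u, huI, hue⟩
  · rintro I J hIp hIc hJp hJc hIJ ⟨w, hwIJ, hw⟩
    have hadjfull : ∀ (K : Set V), K.Pairwise (fun u v => ¬ G.Adj u v) →
        K.ncard = Fintype.card V - 2 * k + 1 →
        ∀ p ∈ K, ∀ q, q ∉ K → G.Adj p q := by
      intro K hKp hKc p hp q hq
      have hsub : G.neighborSet p ⊆ Kᶜ := by
        intro z hz hzK
        exact hKp hp hzK (G.ne_of_adj hz) hz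
      have heq : G.neighborSet p = Kᶜ :=
        Set.eq_of_subset_of_ncard_le hsub (le_trans (hcompl K hKc) (hdeg p)) (Set.toFinite _)
      have hq' : q ∈ Kᶜ := hq
      rw [← heq] at hq'
      exact hq'
    have hdisjIJ : ∀ p, p ∈ I → p ∈ J → False := by
      intro p hpI hpJ
      have hJI : J ⊆ I := by
        intro q hqJ
        by_contra hqI
        exact hJp hpJ hqJ (fun hpq => hqI (hpq ▸ hpI)) (hadjfull I hIp hIc p hpI q hqI)
      exact hIJ (Set.eq_of_subset_of_ncard_le hJI (le_of_eq (hIc.trans hJc.symm))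
        (Set.toFinite _)).symm
    obtain ⟨i, e, heF, hCe, u, huI, hue⟩ := key I hIp hIc
    obtain ⟨j, e', he'F, hCe', u', hu'J, hu'e⟩ := key J hJp hJc
    have hwe : w ∈ e := hw e heF ⟨u, Or.inl huI, hue⟩
    have hwe' : w ∈ e' := hw e' he'F ⟨u', Or.inr hu'J, hu'e⟩
    have hwi : w ∈ C i := by rw [hCe]; exact hwe
    have hwj : w ∈ C j := by rw [hCe']; exact hwe'
    have hij : i = j := by
      by_contra hne
      exact (Set.disjoint_left.mp (hCd i j hne) hwi) hwj
    subst hij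
    have huw : u ≠ w := fun hh => hwIJ (Or.inl (hh ▸ huI))
    have hee : e = s(u, w) := (Sym2.mem_and_mem_iff huw).mp ⟨hue, hwe⟩
    have hu'Ci : u' ∈ C i := by rw [hCe']; exact hu'e
    rw [hCe] at hu'Ci
    have hu'mem : u' ∈ e := hu'Ci
    rw [hee] at hu'mem
    rcases Sym2.mem_iff.mp hu'mem with rfl | rfl
    · exact hdisjIJ u' huI hu'J
    · exact hwIJ (Or.inr hu'J)
end
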